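/- Let Ṽ be a t×t real positive definite matrix (t ≥ 1), and for 1 ≤ i ≤ t let Ṽ_i denote its leading principal i×i submatrix (which is positive definite, hence invertible). For each i define ζ_i := Ṽ_i^{−1}1_i / (1_iᵀṼ_i^{−1}1_i) ∈ ℝ^i and let Z be the t×t matrix whose i-th column is ζ_i padded with zeros in positions i+1,…,t. Then the matrix V := ZᵀṼZ is L-banded with diagonal d_i = 1/(1_iᵀṼ_i^{−1}1_i), i.e., V_{i,j} = d_{max(i,j)} for all 1 ≤ i,j ≤ t. (Equivalently: step-by-step optimal damping of a sequence of observations produces a new sequence whose error covariance matrix is L-banded.) -/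

import Mathlib

open Matrix

/-- The leading principal `(i+1) × (i+1)` submatrix of `A`
(for an index `i : Fin (n+1)`, i.e. the paper's `Ṽ_{i+1}`). -/
def leadingSub {n : ℕ} (A : Matrix (Fin (n + 1)) (Fin (n + 1)) ℝ) (i : Fin (n + 1)) :
    Matrix (Fin (i.val + 1)) (Fin (i.val + 1)) ℝ :=
  fun k l => A (Fin.castLE i.isLt k) (Fin.castLE i.isLt l)

/-- The optimal damping vector `ζ_i := Ṽ_i⁻¹1_i / (1_iᵀṼ_i⁻¹1_i)` built from
the leading principal submatrix of `A` of size `i.val + 1`. -/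
noncomputable def dampVec {n : ℕ} (A : Matrix (Fin (n + 1)) (Fin (n + 1)) ℝ)
    (i : Fin (n + 1)) : Fin (i.val + 1) → ℝ :=
  ((1 : Fin (i.val + 1) → ℝ) ⬝ᵥ ((leadingSub A i)⁻¹ *ᵥ (1 : Fin (i.val + 1) → ℝ)))⁻¹ •
    ((leadingSub A i)⁻¹ *ᵥ (1 : Fin (i.val + 1) → ℝ))

/-- The matrix `Z` whose `i`-th column is `ζ_i` padded with zeros. -/
noncomputable def dampMat {n : ℕ} (A : Matrix (Fin (n + 1)) (Fin (n + 1)) ℝ) :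
    Matrix (Fin (n + 1)) (Fin (n + 1)) ℝ :=
  fun k i => if h : k.val ≤ i.val then dampVec A i ⟨k.val, by omega⟩ else 0

/-- The optimally damped MSE `d_i := 1/(1_iᵀṼ_i⁻¹1_i)` of the leading
principal submatrix of `A` of size `i.val + 1`. -/
noncomputable def dampedMSE {n : ℕ} (A : Matrix (Fin (n + 1)) (Fin (n + 1)) ℝ)
    (i : Fin (n + 1)) : ℝ :=
  ((1 : Fin (i.val + 1) → ℝ) ⬝ᵥ ((leadingSub A i)⁻¹ *ᵥ (1 : Fin (i.val + 1) → ℝ)))⁻¹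

lemma sum_castLE {M : Type*} [AddCommMonoid M] {n m : ℕ} (h : m + 1 ≤ n + 1)
    (g : Fin (n+1) → M) (hg : ∀ l : Fin (n+1), ¬ l.val ≤ m → g l = 0) :
    ∑ l : Fin (n+1), g l = ∑ l : Fin (m+1), g (Fin.castLE h l) := by
  show _ = ∑ l : Fin (m+1), g ((Fin.castLEEmb h) l)
  rw [← Finset.sum_map Finset.univ (Fin.castLEEmb h) g]
  refine (Finset.sum_subset (Finset.subset_univ _) ?_).symm
  intro l _ hl
  apply hg
  intro hle
  apply hl
  simp only [Finset.mem_map, Finset.mem_univ, true_and]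
  exact ⟨⟨l.val, by omega⟩, by ext; simp⟩

lemma leadingSub_posDef {n : ℕ} {A : Matrix (Fin (n + 1)) (Fin (n + 1)) ℝ}
    (hA : A.PosDef) (i : Fin (n + 1)) : (leadingSub A i).PosDef := by
  refine posDef_iff_dotProduct_mulVec.mpr ⟨?_, ?_⟩
  · ext k l
    have := congrFun (congrFun hA.1 (Fin.castLE i.isLt l)) (Fin.castLE i.isLt k)
    simpa [leadingSub, conjTranspose_apply] using this.symm
  · intro x hx
    set y : Fin (n+1) → ℝ := fun k => if h : k.val ≤ i.val then x ⟨k.val, by omega⟩ else 0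
      with hy
    have hyx : ∀ k : Fin (i.val + 1), y (Fin.castLE i.isLt k) = x k := by
      intro k
      simp only [hy, Fin.castLE]
      rw [dif_pos (by omega)]
    have hy0 : y ≠ 0 := by
      intro h0
      apply hx
      funext k
      have := congrFun h0 (Fin.castLE i.isLt k)
      rw [hyx k] at this
      exact this
    have key : star x ⬝ᵥ (leadingSub A i *ᵥ x) = star y ⬝ᵥ (A *ᵥ y) := by
      simp only [dotProduct, mulVec, star_trivial]
      rw [sum_castLE i.isLt (fun k => y k * ∑ l, A k l * y l)
        (by intro l hl; simp only [hy]; rw [dif_neg (by omega)]; ring)]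
      refine Finset.sum_congr rfl fun k _ => ?_
      rw [hyx k]
      congr 1
      rw [sum_castLE i.isLt (fun l => A (Fin.castLE i.isLt k) l * y l)
        (by intro l hl; simp only [hy]; rw [dif_neg (by omega)]; ring)]
      refine Finset.sum_congr rfl fun l _ => ?_
      rw [hyx l]
      rfl
    rw [key]
    exact hA.dotProduct_mulVec_pos hy0

lemma denom_pos {n : ℕ} {A : Matrix (Fin (n + 1)) (Fin (n + 1)) ℝ}
    (hA : A.PosDef) (i : Fin (n + 1)) :
    0 < (1 : Fin (i.val + 1) → ℝ) ⬝ᵥ ((leadingSub A i)⁻¹ *ᵥ (1 : Fin (i.val + 1) → ℝ)) := by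
  have h1 : ((leadingSub A i)⁻¹).PosDef := (leadingSub_posDef hA i).inv
  have := h1.dotProduct_mulVec_pos (x := (1 : Fin (i.val + 1) → ℝ)) (by
    intro h0
    have := congrFun h0 0
    simp at this)
  simpa using this

lemma sum_dampVec {n : ℕ} {A : Matrix (Fin (n + 1)) (Fin (n + 1)) ℝ}
    (hA : A.PosDef) (i : Fin (n + 1)) :
    ∑ k, dampVec A i k = 1 := by
  have hd := denom_pos hA i
  simp only [dampVec, Pi.smul_apply, smul_eq_mul, ← Finset.mul_sum]
  rw [inv_mul_eq_one₀ (ne_of_gt hd)]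
  simp [dotProduct]

lemma mulVec_dampVec {n : ℕ} {A : Matrix (Fin (n + 1)) (Fin (n + 1)) ℝ}
    (hA : A.PosDef) (i : Fin (n + 1)) :
    leadingSub A i *ᵥ dampVec A i = fun _ => dampedMSE A i := by
  have hL := leadingSub_posDef hA i
  have hdet : IsUnit (leadingSub A i).det := isUnit_iff_ne_zero.2 (ne_of_gt hL.det_pos)
  funext k
  simp only [dampVec, mulVec_smul]
  rw [mulVec_mulVec, mul_nonsing_inv _ hdet, one_mulVec]
  simp [dampedMSE]

/-- The key identity: for `k ≤ j`, the `k`-th entry of `A *ᵥ (j-th column of Z)` equals `d_j`. -/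
lemma key_sum {n : ℕ} {A : Matrix (Fin (n + 1)) (Fin (n + 1)) ℝ}
    (hA : A.PosDef) (j k : Fin (n + 1)) (hk : k.val ≤ j.val) :
    ∑ l, A k l * dampMat A l j = dampedMSE A j := by
  rw [sum_castLE j.isLt (fun l => A k l * dampMat A l j)
    (by intro l hl; simp only [dampMat]; rw [dif_neg (by omega)]; ring)]
  have : ∀ l : Fin (j.val + 1), A k (Fin.castLE j.isLt l) * dampMat A (Fin.castLE j.isLt l) j
      = leadingSub A j ⟨k.val, by omega⟩ l * dampVec A j l := by
    intro l
    simp only [dampMat, leadingSub, Fin.castLE]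
    rw [dif_pos (by omega)]
  rw [Finset.sum_congr rfl fun l _ => this l]
  have := congrFun (mulVec_dampVec hA j) ⟨k.val, by omega⟩
  simpa [mulVec, dotProduct] using this

theorem stepwise_damping_lbanded (n : ℕ)
    (A : Matrix (Fin (n + 1)) (Fin (n + 1)) ℝ) (hA : A.PosDef) :
    ∀ i j : Fin (n + 1), ((dampMat A)ᵀ * A * dampMat A) i j = dampedMSE A (max i j) := by
  have expand : ∀ i j : Fin (n+1), ((dampMat A)ᵀ * A * dampMat A) i j
      = ∑ k, dampMat A k i * ∑ l, A k l * dampMat A l j := by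
    intro i j
    simp only [Matrix.mul_apply, transpose_apply, Finset.sum_mul, Finset.mul_sum]
    rw [Finset.sum_comm]
    exact Finset.sum_congr rfl fun k _ => Finset.sum_congr rfl fun l _ => by ring
  have H : ∀ i j : Fin (n+1), i ≤ j → ((dampMat A)ᵀ * A * dampMat A) i j = dampedMSE A j := by
    intro i j hij
    rw [expand i j]
    have step : ∀ k : Fin (n+1), dampMat A k i * ∑ l, A k l * dampMat A l j
        = dampMat A k i * dampedMSE A j := by
      intro k
      by_cases hk : k.val ≤ i.val
      · rw [key_sum hA j k (le_trans hk hij)]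
      · simp only [dampMat]
        rw [dif_neg hk, zero_mul, zero_mul]
    rw [Finset.sum_congr rfl fun k _ => step k, ← Finset.sum_mul]
    have : ∑ k, dampMat A k i = 1 := by
      rw [sum_castLE i.isLt (fun k => dampMat A k i)
        (by intro l hl; simp only [dampMat]; rw [dif_neg (by omega)])]
      rw [← sum_dampVec hA i]
      refine Finset.sum_congr rfl fun k _ => ?_
      simp only [dampMat, Fin.castLE]
      rw [dif_pos (by omega)]
    rw [this, one_mul]
  intro i j
  rcases le_total i j with h | h
  · rw [max_eq_right h]; exact H i j h
  · rw [max_eq_left h, ← H j i h]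
    have hAT : Aᵀ = A := by
      ext k l
      have := congrFun (congrFun hA.1 k) l
      simpa using this
    have hsymm : ((dampMat A)ᵀ * A * dampMat A)ᵀ = (dampMat A)ᵀ * A * dampMat A := by
      rw [transpose_mul, transpose_mul, transpose_transpose, hAT, ← mul_assoc]
    calc ((dampMat A)ᵀ * A * dampMat A) i j
        = ((dampMat A)ᵀ * A * dampMat A)ᵀ j i := rfl
      _ = ((dampMat A)ᵀ * A * dampMat A) j i := by rw [hsymm]
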